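/- Fix reals e > 0, c > d > 0, w0 > 0, w2 > 0 and λ > 0. Define u0(x) = (w0/(2·ln 2)) · e/(1 + e·x) − λ and u2(x) = (w2/(2·ln 2)) · (c/(1 + c·x) − d/(1 + d·x)) − λ, and for p0, p2 ≥ 0 define L2(p0, p2) = (w0/2)·log2((1 + e·(p0 + p2))/(1 + e·p2)) + (w2/2)·log2((1 + c·p2)/(1 + d·p2)) − λ·(p0 + p2). Then for all p0, p2 ≥ 0, L2(p0, p2) = ∫_{p2}^{p2 + p0} u0(x) dx + ∫_{0}^{p2} u2(x) dx, and consequently L2(p0, p2) ≤ ∫_{0}^{∞} max(max(u0(x), u2(x)), 0) dx, the latter integral being finite. -/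

import Mathlib

open MeasureTheory intervalIntegral

lemma cont_div_aux (k : ℝ) (hk : 0 < k) :
    ContinuousOn (fun x => k / (1 + k * x)) (Set.Ici (0:ℝ)) := by
  apply ContinuousOn.div continuousOn_const (by fun_prop)
  intro x hx
  have : (0:ℝ) ≤ x := hx
  nlinarith

lemma ii_aux (k a b : ℝ) (hk : 0 < k) (ha : 0 ≤ a) (hb : 0 ≤ b) :
    IntervalIntegrable (fun x => k / (1 + k * x)) volume a b := by
  apply ContinuousOn.intervalIntegrable
  apply (cont_div_aux k hk).mono
  intro x hx
  exact le_trans (le_min ha hb) hx.1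

lemma log_deriv_int (k a b : ℝ) (hk : 0 < k) (ha : 0 ≤ a) (hb : 0 ≤ b) :
    ∫ x in a..b, k / (1 + k * x) = Real.log (1 + k * b) - Real.log (1 + k * a) := by
  have hpos : ∀ x ∈ Set.uIcc a b, 0 < 1 + k * x := by
    intro x hx
    have h0 : (0:ℝ) ≤ x := le_trans (le_min ha hb) hx.1
    nlinarith
  have hder : ∀ x ∈ Set.uIcc a b,
      HasDerivAt (fun x => Real.log (1 + k * x)) (k / (1 + k * x)) x := by
    intro x hx
    have h := ((hasDerivAt_id x).const_mul k).const_add (1:ℝ)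
    have h2 := (Real.hasDerivAt_log (hpos x hx).ne').comp x h
    simpa [div_eq_inv_mul, mul_comm, Function.comp_def] using h2
  exact integral_eq_sub_of_hasDerivAt hder (ii_aux k a b hk ha hb)

theorem L2_integral_repr_and_bound (e c d w0 w2 lam : ℝ) (he : 0 < e)
    (hd : 0 < d) (hdc : d < c) (hw0 : 0 < w0) (hw2 : 0 < w2) (hlam : 0 < lam) :
    let u0 : ℝ → ℝ := fun x => w0 / (2 * Real.log 2) * (e / (1 + e * x)) - lam
    let u2 : ℝ → ℝ := fun x =>
      w2 / (2 * Real.log 2) * (c / (1 + c * x) - d / (1 + d * x)) - lam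
    let L2 : ℝ → ℝ → ℝ := fun p0 p2 =>
      (w0 / 2) * Real.logb 2 ((1 + e * (p0 + p2)) / (1 + e * p2)) +
      (w2 / 2) * Real.logb 2 ((1 + c * p2) / (1 + d * p2)) - lam * (p0 + p2)
    (∀ p0 p2 : ℝ, 0 ≤ p0 → 0 ≤ p2 →
      L2 p0 p2 = (∫ x in p2..(p2 + p0), u0 x) + ∫ x in (0:ℝ)..p2, u2 x) ∧
    (∀ p0 p2 : ℝ, 0 ≤ p0 → 0 ≤ p2 →
      L2 p0 p2 ≤ ∫ x in Set.Ioi (0:ℝ), max (max (u0 x) (u2 x)) 0) ∧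
    IntegrableOn (fun x => max (max (u0 x) (u2 x)) 0) (Set.Ioi (0:ℝ)) := by
  intro u0 u2 L2
  have hc : 0 < c := hd.trans hdc
  have hlog2 : 0 < Real.log 2 := Real.log_pos (by norm_num)
  have hL : 0 < 2 * Real.log 2 := by positivity
  -- integral of u0 over [a,b]
  have hI0 : ∀ a b : ℝ, 0 ≤ a → 0 ≤ b → (∫ x in a..b, u0 x) =
      w0 / (2 * Real.log 2) * (Real.log (1 + e * b) - Real.log (1 + e * a))
        - (b - a) * lam := by
    intro a b ha hb
    show (∫ x in a..b, (w0 / (2 * Real.log 2) * (e / (1 + e * x)) - lam)) = _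
    rw [integral_sub ((ii_aux e a b he ha hb).const_mul _) intervalIntegrable_const,
      intervalIntegral.integral_const_mul, log_deriv_int e a b he ha hb, intervalIntegral.integral_const, smul_eq_mul]
  have hI2 : ∀ a b : ℝ, 0 ≤ a → 0 ≤ b → (∫ x in a..b, u2 x) =
      w2 / (2 * Real.log 2) * ((Real.log (1 + c * b) - Real.log (1 + c * a))
        - (Real.log (1 + d * b) - Real.log (1 + d * a))) - (b - a) * lam := by
    intro a b ha hb
    show (∫ x in a..b, (w2 / (2 * Real.log 2) * (c / (1 + c * x) - d / (1 + d * x)) - lam)) = _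
    rw [integral_sub (((ii_aux c a b hc ha hb).sub (ii_aux d a b hd ha hb)).const_mul _)
        intervalIntegrable_const,
      intervalIntegral.integral_const_mul, integral_sub (ii_aux c a b hc ha hb) (ii_aux d a b hd ha hb),
      log_deriv_int c a b hc ha hb, log_deriv_int d a b hd ha hb, intervalIntegral.integral_const, smul_eq_mul]
  -- part 1 : representation
  have hrepr : ∀ p0 p2 : ℝ, 0 ≤ p0 → 0 ≤ p2 →
      L2 p0 p2 = (∫ x in p2..(p2 + p0), u0 x) + ∫ x in (0:ℝ)..p2, u2 x := by
    intro p0 p2 hp0 hp2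
    rw [hI0 p2 (p2 + p0) hp2 (by linarith), hI2 0 p2 le_rfl hp2]
    show (w0 / 2) * Real.logb 2 ((1 + e * (p0 + p2)) / (1 + e * p2)) +
      (w2 / 2) * Real.logb 2 ((1 + c * p2) / (1 + d * p2)) - lam * (p0 + p2) = _
    have h1 : (0:ℝ) < 1 + e * (p0 + p2) := by nlinarith
    have h2 : (0:ℝ) < 1 + e * p2 := by nlinarith
    have h3 : (0:ℝ) < 1 + c * p2 := by nlinarith
    have h4 : (0:ℝ) < 1 + d * p2 := by nlinarith
    rw [Real.logb, Real.logb, Real.log_div h1.ne' h2.ne', Real.log_div h3.ne' h4.ne']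
    have : e * (p2 + p0) = e * (p0 + p2) := by ring
    rw [this]
    simp only [mul_zero, Real.log_one]
    field_simp
    ring
  -- continuity facts
  have hu0cont : ContinuousOn u0 (Set.Ici 0) :=
    (continuousOn_const.mul (cont_div_aux e he)).sub continuousOn_const
  have hu2cont : ContinuousOn u2 (Set.Ici 0) :=
    (continuousOn_const.mul ((cont_div_aux c hc).sub (cont_div_aux d hd))).sub
      continuousOn_const
  set g : ℝ → ℝ := fun x => max (max (u0 x) (u2 x)) 0 with hgdef
  have hgcont : ContinuousOn g (Set.Ici 0) := (hu0cont.sup hu2cont).sup continuousOn_const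
  set T : ℝ := (max w0 w2) / (2 * Real.log 2 * lam) with hTdef
  have hT : 0 < T := div_pos (lt_max_iff.2 (Or.inl hw0)) (by positivity)
  -- key smallness estimate
  have hkey : ∀ w k x : ℝ, 0 < w → 0 < k → T < x → w ≤ max w0 w2 →
      w / (2 * Real.log 2) * (k / (1 + k * x)) ≤ lam := by
    intro w k x hw hk hx hwle
    have hx0 : 0 < x := hT.trans hx
    have hxden : (0:ℝ) < 1 + k * x := by nlinarith
    have h1 : k / (1 + k * x) ≤ 1 / x := by
      rw [div_le_div_iff₀ hxden hx0]; nlinarith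
    have h2 : w / (2 * Real.log 2) * (k / (1 + k * x)) ≤
        w / (2 * Real.log 2) * (1 / x) := by
      apply mul_le_mul_of_nonneg_left h1 (by positivity)
    have h3 : max w0 w2 < x * (2 * Real.log 2 * lam) := by
      rw [hTdef, div_lt_iff₀ (by positivity)] at hx; linarith
    have h4 : w / (2 * Real.log 2) * (1 / x) ≤ lam := by
      rw [div_mul_eq_mul_div, mul_one_div, div_div, div_le_iff₀ (by positivity)]
      nlinarith
    linarith
  have hzero : ∀ x, T < x → g x = 0 := by
    intro x hx
    have hx0 : 0 < x := hT.trans hx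
    have h0 : u0 x ≤ 0 := by
      have := hkey w0 e x hw0 he hx (le_max_left _ _)
      simp only [u0]; linarith
    have h2 : u2 x ≤ 0 := by
      have hk := hkey w2 c x hw2 hc hx (le_max_right _ _)
      have hdpos : 0 ≤ d / (1 + d * x) := by positivity
      have hcc : w2 / (2 * Real.log 2) * (c / (1 + c * x) - d / (1 + d * x)) ≤
          w2 / (2 * Real.log 2) * (c / (1 + c * x)) := by
        apply mul_le_mul_of_nonneg_left _ (by positivity)
        linarith
      simp only [u2]; linarith
    simp only [hgdef]
    exact max_eq_right (max_le h0 h2)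
  -- integrability of g on Ioi 0
  have hInt1 : IntegrableOn g (Set.Ioc 0 T) := by
    have := (hgcont.mono (Set.Icc_subset_Ici_self : Set.Icc (0:ℝ) T ⊆ Set.Ici 0)).integrableOn_Icc (μ := volume)
    exact this.mono_set Set.Ioc_subset_Icc_self
  have hInt2 : IntegrableOn g (Set.Ioi T) := by
    exact (integrableOn_congr_fun (fun x hx => hzero x hx) measurableSet_Ioi).mpr
      integrableOn_zero
  have hgInt : IntegrableOn g (Set.Ioi 0) := by
    have hu : Set.Ioi (0:ℝ) = Set.Ioc 0 T ∪ Set.Ioi T := (Set.Ioc_union_Ioi_eq_Ioi hT.le).symm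
    rw [hu]; exact hInt1.union hInt2
  refine ⟨hrepr, ?_, hgInt⟩
  intro p0 p2 hp0 hp2
  rw [hrepr p0 p2 hp0 hp2]
  have hle : p2 ≤ p2 + p0 := by linarith
  have hsub1 : Set.Ioc p2 (p2 + p0) ⊆ Set.Ioi 0 := fun x hx => lt_of_le_of_lt hp2 hx.1
  have hsub2 : Set.Ioc 0 p2 ⊆ Set.Ioi 0 := Set.Ioc_subset_Ioi_self
  have hu0int : IntegrableOn u0 (Set.Ioc p2 (p2 + p0)) := by
    have : IntervalIntegrable u0 volume p2 (p2 + p0) :=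
      ((ii_aux e p2 (p2 + p0) he hp2 (by linarith)).const_mul _).sub intervalIntegrable_const
    exact (intervalIntegrable_iff_integrableOn_Ioc_of_le hle).mp this
  have hu2int : IntegrableOn u2 (Set.Ioc 0 p2) := by
    have : IntervalIntegrable u2 volume 0 p2 :=
      (((ii_aux c 0 p2 hc le_rfl hp2).sub (ii_aux d 0 p2 hd le_rfl hp2)).const_mul _).sub
        intervalIntegrable_const
    exact (intervalIntegrable_iff_integrableOn_Ioc_of_le hp2).mp this
  have h1 : (∫ x in p2..(p2 + p0), u0 x) ≤ ∫ x in Set.Ioc p2 (p2 + p0), g x := by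
    rw [intervalIntegral.integral_of_le hle]
    apply setIntegral_mono_on hu0int (hgInt.mono_set hsub1) measurableSet_Ioc
    intro x _; exact le_max_of_le_left (le_max_left _ _)
  have h2 : (∫ x in (0:ℝ)..p2, u2 x) ≤ ∫ x in Set.Ioc 0 p2, g x := by
    rw [intervalIntegral.integral_of_le hp2]
    apply setIntegral_mono_on hu2int (hgInt.mono_set hsub2) measurableSet_Ioc
    intro x _; exact le_max_of_le_left (le_max_right _ _)
  have hunion : (∫ x in Set.Ioc 0 p2, g x) + ∫ x in Set.Ioc p2 (p2 + p0), g x =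
      ∫ x in Set.Ioc 0 (p2 + p0), g x := by
    rw [← setIntegral_union (Set.Ioc_disjoint_Ioc_of_le le_rfl) measurableSet_Ioc
      (hgInt.mono_set hsub2) (hgInt.mono_set hsub1), Set.Ioc_union_Ioc_eq_Ioc hp2 hle]
  have hfinal : (∫ x in Set.Ioc 0 (p2 + p0), g x) ≤ ∫ x in Set.Ioi 0, g x := by
    apply setIntegral_mono_set hgInt
    · exact Filter.Eventually.of_forall fun x => le_max_right _ _
    · exact HasSubset.Subset.eventuallyLE Set.Ioc_subset_Ioi_self
  linarith
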